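/- Suppose for a k × m real matrix B there exist positive weights μ_j with ∑_{j=1}^m μ_j = 1 such that ‖B D_μ^{-1/2}‖ ≤ √(π/2) · ‖B‖_{∞→2}, where D_μ = diag(μ_j). Then for every δ ∈ (0,1) there exists a subset J ⊆ [m] with |J| ≥ (1-δ)m such that the restricted matrix satisfies ‖B_{[k]×J}‖ ≤ 2‖B‖_{∞→2}/√(δ m). -/

import Mathlib

noncomputable def e2 {n : ℕ} (v : Fin n → ℝ) : ℝ := Real.sqrt (∑ i, (v i)^2)

/-- The ℓ²→ℓ² operator norm of a matrix. -/
noncomputable def opNorm {k m : ℕ} (B : Matrix (Fin k) (Fin m) ℝ) : ℝ :=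
  sSup {c : ℝ | ∃ x : Fin m → ℝ, e2 x ≤ 1 ∧ c = e2 (B.mulVec x)}

/-- The ℓ∞→ℓ² operator norm of a matrix. -/
noncomputable def normInfTwo {k m : ℕ} (B : Matrix (Fin k) (Fin m) ℝ) : ℝ :=
  sSup {c : ℝ | ∃ x : Fin m → ℝ, (∀ j, |x j| ≤ 1) ∧ c = e2 (B.mulVec x)}

lemma e2_nonneg {n : ℕ} (v : Fin n → ℝ) : 0 ≤ e2 v := Real.sqrt_nonneg _

lemma sq_sum_of_e2_le_one {n : ℕ} {v : Fin n → ℝ} (h : e2 v ≤ 1) : ∑ i, (v i)^2 ≤ 1 := by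
  have h0 : (0:ℝ) ≤ ∑ i, (v i)^2 := Finset.sum_nonneg fun i _ => sq_nonneg _
  have h1 := Real.sq_sqrt h0
  unfold e2 at h
  nlinarith [Real.sqrt_nonneg (∑ i, (v i)^2)]

lemma normInfTwo_nonneg {k m : ℕ} (B : Matrix (Fin k) (Fin m) ℝ) : 0 ≤ normInfTwo B :=
  Real.sSup_nonneg (by rintro c ⟨x, _, rfl⟩; exact e2_nonneg _)

lemma le_opNorm {k m : ℕ} (A : Matrix (Fin k) (Fin m) ℝ) (x : Fin m → ℝ) (hx : e2 x ≤ 1) :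
    e2 (A.mulVec x) ≤ opNorm A := by
  have hmem : e2 (A.mulVec x) ∈ {c : ℝ | ∃ x' : Fin m → ℝ, e2 x' ≤ 1 ∧ c = e2 (A.mulVec x')} :=
    ⟨x, hx, rfl⟩
  refine le_csSup ⟨Real.sqrt (∑ i, ∑ j, (A i j)^2), ?_⟩ hmem
  rintro c ⟨y, hy, rfl⟩
  apply Real.sqrt_le_sqrt
  have hy1 : ∑ j, (y j)^2 ≤ 1 := sq_sum_of_e2_le_one hy
  calc ∑ i, (A.mulVec y i)^2
      ≤ ∑ i, ((∑ j, (A i j)^2) * ∑ j, (y j)^2) := by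
        refine Finset.sum_le_sum fun i _ => ?_
        simp only [Matrix.mulVec, dotProduct]
        exact Finset.sum_mul_sq_le_sq_mul_sq _ (fun j => A i j) y
    _ ≤ ∑ i, ((∑ j, (A i j)^2) * 1) := by
        refine Finset.sum_le_sum fun i _ => ?_
        exact mul_le_mul_of_nonneg_left hy1 (Finset.sum_nonneg fun j _ => sq_nonneg _)
    _ = ∑ i, ∑ j, (A i j)^2 := by simp

theorem stmt4 (k m : ℕ) (B : Matrix (Fin k) (Fin m) ℝ) (μ : Fin m → ℝ)
    (hμpos : ∀ j, 0 < μ j) (hμsum : ∑ j, μ j = 1)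
    (hfact : opNorm (B * Matrix.diagonal (fun j => (Real.sqrt (μ j))⁻¹)) ≤
      Real.sqrt (Real.pi / 2) * normInfTwo B)
    (δ : ℝ) (hδ : 0 < δ) (hδ1 : δ < 1) :
    ∃ J : Finset (Fin m), (1 - δ) * m ≤ J.card ∧
      opNorm (Matrix.of fun i j => if j ∈ J then B i j else 0) ≤
        2 * normInfTwo B / Real.sqrt (δ * m) := by
  have hm : 0 < m := by
    rcases Nat.eq_zero_or_pos m with h | h
    · subst h; simp at hμsum
    · exact h
  have hδm : (0:ℝ) < δ * m := by positivity
  set J : Finset (Fin m) := Finset.univ.filter (fun j => μ j * (δ * m) ≤ 1) with hJ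
  refine ⟨J, ?_, ?_⟩
  · -- cardinality bound
    have hcompl : ∀ j ∈ Jᶜ, 1 / (δ * m) ≤ μ j := by
      intro j hj
      simp only [hJ, Finset.mem_compl, Finset.mem_filter, Finset.mem_univ, true_and,
        not_le] at hj
      rw [div_le_iff₀ hδm]
      linarith
    have h1 : (Jᶜ.card : ℝ) * (1 / (δ * m)) ≤ ∑ j ∈ Jᶜ, μ j := by
      have := Finset.card_nsmul_le_sum Jᶜ μ (1 / (δ * m)) hcompl
      simpa [nsmul_eq_mul] using this
    have h2 : ∑ j ∈ Jᶜ, μ j ≤ 1 := by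
      rw [← hμsum]
      exact Finset.sum_le_sum_of_subset_of_nonneg (Finset.subset_univ _)
        (fun j _ _ => (hμpos j).le)
    have h3 : (Jᶜ.card : ℝ) ≤ δ * m := by
      have := le_trans h1 h2
      rw [mul_one_div, div_le_one hδm] at this
      exact this
    have hcard : (J.card : ℝ) = m - Jᶜ.card := by
      have := Finset.card_compl J
      have h := Finset.card_add_card_compl J
      simp only [Fintype.card_fin] at h
      have : (J.card : ℝ) + Jᶜ.card = m := by exact_mod_cast congrArg Nat.cast h
      linarith
    rw [hcard]; nlinarith
  · -- norm bound
    set A := B * Matrix.diagonal (fun j => (Real.sqrt (μ j))⁻¹) with hA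
    have hs : (0:ℝ) < Real.sqrt (δ * m) := Real.sqrt_pos.mpr hδm
    have hrhs : 0 ≤ 2 * normInfTwo B / Real.sqrt (δ * m) := by
      have := normInfTwo_nonneg B
      positivity
    apply Real.sSup_le _ hrhs
    rintro c ⟨x, hx, rfl⟩
    set y : Fin m → ℝ := fun j => Real.sqrt (μ j) * (if j ∈ J then x j else 0) with hy
    -- key1 : restricted matrix applied to x equals A applied to y
    have key1 : (Matrix.of fun i j => if j ∈ J then B i j else 0).mulVec x = A.mulVec y := by
      funext i
      simp only [Matrix.mulVec, dotProduct, hA, Matrix.mul_diagonal, Matrix.of_apply, hy]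
      refine Finset.sum_congr rfl fun j _ => ?_
      have hμj : Real.sqrt (μ j) ≠ 0 := ne_of_gt (Real.sqrt_pos.mpr (hμpos j))
      by_cases hjJ : j ∈ J <;> field_simp [hjJ] <;> simp [hjJ]
    -- bound on ∑ y²
    have hysq : ∑ j, (y j)^2 ≤ 1 / (δ * m) := by
      have hxsq : ∑ j, (x j)^2 ≤ 1 := sq_sum_of_e2_le_one hx
      have : ∀ j, (y j)^2 ≤ (x j)^2 / (δ * m) := by
        intro j
        by_cases hjJ : j ∈ J
        · have hμJ : μ j * (δ * m) ≤ 1 := by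
            simpa [hJ, hjJ] using (Finset.mem_filter.mp hjJ).2
          have hμle : μ j ≤ 1 / (δ * m) := by
            rw [le_div_iff₀ hδm]; exact hμJ
          have : (y j)^2 = μ j * (x j)^2 := by
            simp only [hy, hjJ, if_true, mul_pow, Real.sq_sqrt (hμpos j).le]
          rw [one_div] at hμle
          rw [this, div_eq_inv_mul]
          exact mul_le_mul_of_nonneg_right hμle (sq_nonneg _)
        · have h0 : (0:ℝ) ≤ (x j)^2 / (δ * m) := by positivity
          simpa [hy, hjJ] using h0
      calc ∑ j, (y j)^2 ≤ ∑ j, (x j)^2 / (δ * m) := Finset.sum_le_sum fun j _ => this j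
        _ = (∑ j, (x j)^2) / (δ * m) := by rw [Finset.sum_div]
        _ ≤ 1 / (δ * m) := by gcongr
    -- scaled vector z
    set z : Fin m → ℝ := Real.sqrt (δ * m) • y with hz
    have hez : e2 z ≤ 1 := by
      apply Real.sqrt_le_one.mpr
      have : ∑ j, (z j)^2 = (δ * m) * ∑ j, (y j)^2 := by
        simp only [hz, Pi.smul_apply, smul_eq_mul, mul_pow, Real.sq_sqrt hδm.le,
          Finset.mul_sum]
      rw [this]
      calc (δ * m) * ∑ j, (y j)^2 ≤ (δ * m) * (1 / (δ * m)) :=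
            mul_le_mul_of_nonneg_left hysq hδm.le
        _ = 1 := by field_simp
    have hAz : e2 (A.mulVec z) ≤ Real.sqrt (Real.pi / 2) * normInfTwo B :=
      le_trans (le_opNorm A z hez) hfact
    have hAzAy : e2 (A.mulVec z) = Real.sqrt (δ * m) * e2 (A.mulVec y) := by
      rw [hz, Matrix.mulVec_smul]
      unfold e2
      rw [← Real.sqrt_mul hδm.le, Finset.mul_sum]
      congr 1
      refine Finset.sum_congr rfl fun i _ => ?_
      simp only [Pi.smul_apply, smul_eq_mul, mul_pow, Real.sq_sqrt hδm.le]
    have hpi : Real.sqrt (Real.pi / 2) ≤ 2 := by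
      have h4 : Real.sqrt 4 = 2 := by
        rw [show (4:ℝ) = 2^2 by norm_num, Real.sqrt_sq (by norm_num : (0:ℝ) ≤ 2)]
      have := Real.sqrt_le_sqrt (show Real.pi / 2 ≤ 4 by nlinarith [Real.pi_le_four])
      linarith
    rw [key1]
    rw [hAzAy] at hAz
    have h2B : Real.sqrt (Real.pi / 2) * normInfTwo B ≤ 2 * normInfTwo B :=
      mul_le_mul_of_nonneg_right hpi (normInfTwo_nonneg B)
    have := le_trans hAz h2B
    calc e2 (A.mulVec y) = (Real.sqrt (δ * m))⁻¹ * (Real.sqrt (δ * m) * e2 (A.mulVec y)) := by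
          field_simp
      _ ≤ (Real.sqrt (δ * m))⁻¹ * (2 * normInfTwo B) :=
          mul_le_mul_of_nonneg_left this (by positivity)
      _ = 2 * normInfTwo B / Real.sqrt (δ * m) := by rw [div_eq_mul_inv]; ring
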